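/- As x → ∞, ∑_{n ≤ x} φ(n)/(n(n+1)) = (1/ζ(2)) log x + O(1). -/

import Mathlib

open ArithmeticFunction Finset Filter
open scoped ArithmeticFunction.Moebius


lemma abs_moebius_real_le_one (d : ℕ) : |(μ d : ℝ)| ≤ 1 := by
  have := abs_moebius_le_one (n := d)
  exact_mod_cast (by exact_mod_cast this : |((μ d : ℤ) : ℝ)| ≤ 1)

lemma summable_moebius_div_sq : Summable (fun d : ℕ => (μ d : ℝ) / (d:ℝ)^2) := by
  apply Summable.of_norm_bounded (Real.summable_one_div_nat_pow.mpr one_lt_two)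
  intro d
  rcases Nat.eq_zero_or_pos d with h | h
  · simp [h]
  rw [norm_div, norm_pow, Real.norm_natCast]
  have h1 : ‖(μ d : ℝ)‖ ≤ 1 := by rw [Real.norm_eq_abs]; exact abs_moebius_real_le_one d
  have h2 : (0:ℝ) < (d:ℝ)^2 := by positivity
  rw [div_le_div_iff₀ h2 h2]
  nlinarith

lemma sum_inv_sq_tail (N : ℕ) (hN : 1 ≤ N) : ∀ K, N ≤ K →
    ∑ d ∈ Finset.Icc (N+1) K, (1:ℝ) / (d:ℝ)^2 ≤ 1/(N:ℝ) - 1/(K:ℝ) := by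
  intro K hK
  induction K, hK using Nat.le_induction with
  | base => simp
  | succ K hK ih =>
    have hins : Finset.Icc (N+1) (K+1) = insert (K+1) (Finset.Icc (N+1) K) := by
      ext x; simp only [Finset.mem_Icc, Finset.mem_insert]; omega
    rw [hins, Finset.sum_insert (by simp)]
    have hK0 : (0:ℝ) < K := by exact_mod_cast lt_of_lt_of_le hN hK
    have step : (1:ℝ) / ((K:ℝ)+1)^2 ≤ 1/(K:ℝ) - 1/((K:ℝ)+1) := by
      rw [div_sub_div _ _ (ne_of_gt hK0) (by positivity),
        div_le_div_iff₀ (by positivity) (by positivity)]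
      ring_nf
      nlinarith
    push_cast
    push_cast at ih
    linarith

lemma moebius_partial_tail (N : ℕ) (hN : 1 ≤ N) :
    |(∑' d : ℕ, (μ d : ℝ) / (d:ℝ)^2) - ∑ d ∈ Finset.Icc 1 N, (μ d : ℝ) / (d:ℝ)^2|
      ≤ 1/(N:ℝ) := by
  set f : ℕ → ℝ := fun d => (μ d : ℝ) / (d:ℝ)^2 with hf
  have htend : Tendsto (fun K => ∑ d ∈ Finset.Icc 1 K, f d) atTop
      (nhds (∑' d : ℕ, f d)) := by
    have h0 : ∀ K, ∑ d ∈ Finset.Icc 1 K, f d = ∑ d ∈ Finset.range (K+1), f d := by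
      intro K
      rw [Finset.range_eq_Ico, ← Finset.Ico_add_one_right_eq_Icc]
      rw [Finset.sum_Ico_eq_sum_range, Finset.sum_Ico_eq_sum_range]
      simp only [Nat.sub_zero]
      rw [Finset.sum_range_succ']
      have hz : f 0 = 0 := by simp [hf]
      rw [hz, add_zero]
      apply Finset.sum_congr (by simp)
      intro i _
      simp [add_comm 1 i]
    simp_rw [h0]
    exact (summable_moebius_div_sq.hasSum.tendsto_sum_nat).comp (tendsto_add_atTop_nat 1)
  have hev : ∀ K, N ≤ K →
      |(∑ d ∈ Finset.Icc 1 K, f d) - ∑ d ∈ Finset.Icc 1 N, f d| ≤ 1/(N:ℝ) := by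
    intro K hK
    have hsplit : ∑ d ∈ Finset.Icc 1 K, f d
        = ∑ d ∈ Finset.Icc 1 N, f d + ∑ d ∈ Finset.Icc (N+1) K, f d := by
      rw [← Finset.sum_union]
      · congr 1
        ext x; simp only [Finset.mem_union, Finset.mem_Icc]; omega
      · rw [Finset.disjoint_left]; intro a ha hb
        simp only [Finset.mem_Icc] at ha hb; omega
    rw [hsplit, add_sub_cancel_left]
    calc |∑ d ∈ Finset.Icc (N+1) K, f d| ≤ ∑ d ∈ Finset.Icc (N+1) K, |f d| :=
          Finset.abs_sum_le_sum_abs _ _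
    _ ≤ ∑ d ∈ Finset.Icc (N+1) K, (1:ℝ)/(d:ℝ)^2 := by
        apply Finset.sum_le_sum
        intro d hd
        have hd1 : 1 ≤ d := by have := (Finset.mem_Icc.mp hd).1; omega
        have hd0 : (0:ℝ) < (d:ℝ)^2 := by
          have : (0:ℝ) < d := by exact_mod_cast hd1
          positivity
        rw [hf, abs_div, abs_of_pos hd0, div_le_div_iff₀ hd0 hd0]
        nlinarith [abs_moebius_real_le_one d]
    _ ≤ 1/(N:ℝ) - 1/(K:ℝ) := sum_inv_sq_tail N hN K hK
    _ ≤ 1/(N:ℝ) := by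
        have : (0:ℝ) < K := by exact_mod_cast lt_of_lt_of_le hN hK
        have : (0:ℝ) ≤ 1/(K:ℝ) := by positivity
        linarith
  have habs : Tendsto (fun K => |(∑ d ∈ Finset.Icc 1 K, f d) - ∑ d ∈ Finset.Icc 1 N, f d|)
      atTop (nhds |(∑' d : ℕ, f d) - ∑ d ∈ Finset.Icc 1 N, f d|) :=
    ((htend.sub tendsto_const_nhds).abs)
  exact le_of_tendsto habs (Filter.eventually_atTop.mpr ⟨N, hev⟩)

lemma log_div_sq_le (d : ℕ) (hd : 1 ≤ d) :
    Real.log d / (d:ℝ)^2 ≤ 2 * (d:ℝ) ^ (-(3:ℝ)/2) := by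
  have hd0 : (0:ℝ) < d := by exact_mod_cast hd
  have hlog : Real.log d ≤ 2 * Real.sqrt d := by
    have h1 : Real.log (Real.sqrt d) ≤ Real.sqrt d - 1 :=
      Real.log_le_sub_one_of_pos (Real.sqrt_pos.mpr hd0)
    rw [Real.log_sqrt hd0.le] at h1
    linarith
  have hsq : Real.sqrt d = (d:ℝ) ^ ((1:ℝ)/2) := by
    rw [Real.sqrt_eq_rpow]
  have hpow : (d:ℝ)^2 = (d:ℝ) ^ ((2:ℝ)) := by
    rw [← Real.rpow_natCast (d:ℝ) 2]; norm_num
  rw [hpow, div_le_iff₀ (by positivity)]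
  calc Real.log d ≤ 2 * Real.sqrt d := hlog
  _ = 2 * ((d:ℝ) ^ (-(3:ℝ)/2) * (d:ℝ) ^ ((2:ℝ))) := by
      rw [← Real.rpow_add hd0, hsq]
      norm_num
  _ = 2 * (d:ℝ) ^ (-(3:ℝ)/2) * (d:ℝ) ^ ((2:ℝ)) := by ring

lemma moebius_tsum_eq : (∑' d : ℕ, (μ d : ℝ) / (d:ℝ)^2) = 6 / Real.pi ^ 2 := by
  have h2 : (1:ℝ) < (2:ℂ).re := by norm_num
  have hz := LSeries_zeta_mul_Lseries_moebius (s := 2) h2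
  rw [LSeries_zeta_eq_riemannZeta h2, riemannZeta_two] at hz
  have hpi : ((Real.pi : ℂ) ^ 2 : ℂ) ≠ 0 := by
    simp [Real.pi_ne_zero]
  have hm : LSeries (fun n => (μ n : ℂ)) 2 = 6 / (Real.pi:ℂ)^2 := by
    rw [eq_div_iff hpi]
    field_simp at hz
    linear_combination hz
  have key : LSeries (fun n => (μ n : ℂ)) 2 = ((∑' d : ℕ, (μ d : ℝ) / (d:ℝ)^2 : ℝ) : ℂ) := by
    rw [Complex.ofReal_tsum]
    apply tsum_congr
    intro n
    rcases Nat.eq_zero_or_pos n with h | h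
    · simp [h, LSeries.term]
    · rw [LSeries.term_of_ne_zero (by omega)]
      push_cast
      norm_num [Complex.cpow_natCast (↑n) 2]
  rw [key] at hm
  refine Complex.ofReal_inj.mp (hm.trans ?_)
  push_cast
  ring

lemma sum_inv_sq_le (N : ℕ) : ∑ d ∈ Finset.Icc 1 N, (1:ℝ) / (d:ℝ)^2 ≤ 2 := by
  rcases Nat.lt_or_ge N 1 with h | h
  · interval_cases N <;> simp
  · have h2 := sum_inv_sq_tail 1 le_rfl N h
    have hsplit : Finset.Icc 1 N = insert 1 (Finset.Icc 2 N) := by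
      ext x; simp only [Finset.mem_Icc, Finset.mem_insert]; omega
    rw [hsplit, Finset.sum_insert (by simp)]
    have hN0 : (0:ℝ) < N := by exact_mod_cast h
    norm_num at h2 ⊢
    have : (0:ℝ) ≤ 1/(N:ℝ) := by positivity
    have h3 : (1:ℝ)/(N:ℝ) ≤ 1 := by
      rw [div_le_one hN0]; exact_mod_cast h
    have h4 : (0:ℝ) ≤ ((N:ℝ))⁻¹ := by positivity
    linarith


lemma totient_div_eq (n : ℕ) (hn : 0 < n) :
    (Nat.totient n : ℝ) / n = ∑ d ∈ n.divisors, (μ d : ℝ) / d := by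
  have key := (sum_eq_iff_sum_mul_moebius_eq (R := ℝ)
      (f := fun d => (Nat.totient d : ℝ)) (g := fun n => (n : ℝ))).mp ?_ n hn
  · rw [← key, Nat.sum_divisorsAntidiagonal (f := fun a b => (μ a : ℝ) * b), Finset.sum_div]
    apply Finset.sum_congr rfl
    intro d hd
    obtain ⟨hdvd, hn0⟩ := Nat.mem_divisors.mp hd
    have hd0 : 0 < d := Nat.pos_of_mem_divisors hd
    have hdne : (d:ℝ) ≠ 0 := by positivity
    have hnne : (n:ℝ) ≠ 0 := by positivity
    have h1 : ((n / d : ℕ) : ℝ) = (n:ℝ) / d := by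
      rw [eq_div_iff hdne]
      exact_mod_cast Nat.div_mul_cancel hdvd
    rw [h1]
    field_simp
  · intro m hm
    rw [← Nat.cast_sum]
    exact_mod_cast congrArg (Nat.cast : ℕ → ℝ) (Nat.sum_totient m)

lemma sum_swap_divisors (N : ℕ) (f : ℕ → ℕ → ℝ) :
    ∑ n ∈ Finset.Icc 1 N, ∑ d ∈ n.divisors, f d n
      = ∑ d ∈ Finset.Icc 1 N, ∑ m ∈ Finset.Icc 1 (N / d), f d (d * m) := by
  rw [Finset.sum_sigma', Finset.sum_sigma']
  apply Finset.sum_nbij' (i := fun p => (⟨p.2, p.1 / p.2⟩ : Σ _ : ℕ, ℕ))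
    (j := fun p => (⟨p.1 * p.2, p.1⟩ : Σ _ : ℕ, ℕ))
  · rintro ⟨n, d⟩ hp
    simp only [Finset.mem_sigma, Finset.mem_Icc, Nat.mem_divisors] at hp ⊢
    obtain ⟨⟨h1, h2⟩, hdvd, hn0⟩ := hp
    have hd0 : 0 < d := Nat.pos_of_dvd_of_pos hdvd h1
    refine ⟨⟨hd0, le_trans (Nat.le_of_dvd h1 hdvd) h2⟩, ?_, Nat.div_le_div_right h2⟩
    exact Nat.one_le_div_iff hd0 |>.mpr (Nat.le_of_dvd h1 hdvd)
  · rintro ⟨d, m⟩ hp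
    simp only [Finset.mem_sigma, Finset.mem_Icc, Nat.mem_divisors] at hp ⊢
    obtain ⟨⟨hd1, hd2⟩, hm1, hm2⟩ := hp
    refine ⟨⟨Nat.one_le_iff_ne_zero.mpr (by positivity), ?_⟩, dvd_mul_right d m, by positivity⟩
    calc d * m ≤ d * (N / d) := Nat.mul_le_mul_left d hm2
    _ ≤ N := Nat.mul_div_le N d
  · rintro ⟨n, d⟩ hp
    simp only [Finset.mem_sigma, Finset.mem_Icc, Nat.mem_divisors] at hp
    obtain ⟨⟨h1, h2⟩, hdvd, hn0⟩ := hp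
    simp [Nat.mul_div_cancel' hdvd]
  · rintro ⟨d, m⟩ hp
    simp only [Finset.mem_sigma, Finset.mem_Icc, Nat.mem_divisors] at hp
    obtain ⟨⟨hd1, hd2⟩, hm1, hm2⟩ := hp
    simp [Nat.mul_div_cancel_left m (by omega : 0 < d)]
  · rintro ⟨n, d⟩ hp
    simp only [Finset.mem_sigma, Finset.mem_Icc, Nat.mem_divisors] at hp
    obtain ⟨⟨h1, h2⟩, hdvd, hn0⟩ := hp
    simp [Nat.mul_div_cancel' hdvd]


lemma harm_shift (M : ℕ) : ∑ m ∈ Finset.Icc 1 M, (1:ℝ)/((m:ℝ)+1)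
    = (∑ m ∈ Finset.Icc 1 (M+1), (1:ℝ)/(m:ℝ)) - 1 := by
  induction M with
  | zero => simp
  | succ M ih =>
    have h1 : Finset.Icc 1 (M+1) = insert (M+1) (Finset.Icc 1 M) := by
      ext x; simp only [Finset.mem_Icc, Finset.mem_insert]; omega
    have h2 : Finset.Icc 1 (M+2) = insert (M+2) (Finset.Icc 1 (M+1)) := by
      ext x; simp only [Finset.mem_Icc, Finset.mem_insert]; omega
    rw [h1, Finset.sum_insert (by simp), h2, Finset.sum_insert (by simp), ih]
    push_cast
    ring

lemma inner_sum_est (N d : ℕ) (hN : 2 ≤ N) (hd1 : 1 ≤ d) (hd2 : d ≤ N) :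
    |(∑ m ∈ Finset.Icc 1 (N/d), (1:ℝ)/(((d*m : ℕ):ℝ) + 1))
      - (Real.log N - Real.log d)/d| ≤ 3/d := by
  set M := N / d with hMdef
  have hM : 1 ≤ M := (Nat.one_le_div_iff (by omega)).mpr hd2
  have hd0 : (0:ℝ) < d := by exact_mod_cast hd1
  have hM0 : (0:ℝ) < M := by exact_mod_cast hM
  have hN0 : (0:ℝ) < N := by positivity
  set H : ℝ := ∑ m ∈ Finset.Icc 1 M, (1:ℝ)/(m:ℝ) with hHdef
  set T : ℝ := ∑ m ∈ Finset.Icc 1 M, (1:ℝ)/(((d*m : ℕ):ℝ) + 1) with hTdef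
  -- T ≤ H / d
  have hTle : T ≤ H / d := by
    rw [hHdef, Finset.sum_div]
    apply Finset.sum_le_sum
    intro m hm
    have hm1 : (1:ℝ) ≤ m := by exact_mod_cast (Finset.mem_Icc.mp hm).1
    rw [div_div]
    apply div_le_div_of_nonneg_left zero_le_one (by positivity)
    push_cast
    have hd1' : (1:ℝ) ≤ d := by exact_mod_cast hd1
    nlinarith
  -- H/d - 1/d ≤ T
  have hTge : H / d - 1 / d ≤ T := by
    have step : ∀ m ∈ Finset.Icc 1 M, (1:ℝ)/((m:ℝ)+1) / d ≤ (1:ℝ)/(((d*m : ℕ):ℝ) + 1) := by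
      intro m hm
      have hm1 : (1:ℝ) ≤ m := by exact_mod_cast (Finset.mem_Icc.mp hm).1
      rw [div_div]
      apply div_le_div_of_nonneg_left zero_le_one (by positivity)
      push_cast
      have hd1' : (1:ℝ) ≤ d := by exact_mod_cast hd1
      nlinarith
    have := Finset.sum_le_sum step
    rw [← Finset.sum_div, harm_shift] at this
    have hmono : H ≤ ∑ m ∈ Finset.Icc 1 (M+1), (1:ℝ)/(m:ℝ) := by
      apply Finset.sum_le_sum_of_subset_of_nonneg
      · apply Finset.Icc_subset_Icc_right; omega
      · intro i _ _; positivity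
    calc H / d - 1/d ≤ ((∑ m ∈ Finset.Icc 1 (M+1), (1:ℝ)/(m:ℝ)) - 1) / d := by
          rw [sub_div]; gcongr
    _ ≤ T := this
  -- harmonic bounds
  have hHharm : H = ((harmonic M : ℚ) : ℝ) := by
    rw [harmonic_eq_sum_Icc]
    push_cast
    apply Finset.sum_congr rfl
    intro m _
    rw [one_div]
  have hH1 : Real.log M ≤ H := by
    rw [hHharm]
    calc Real.log M ≤ Real.log (M+1) := by
          apply Real.log_le_log hM0; linarith
    _ ≤ _ := by exact_mod_cast log_add_one_le_harmonic M
  have hH2 : H ≤ 1 + Real.log M := by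
    rw [hHharm]; exact_mod_cast harmonic_le_one_add_log M
  -- log M vs log (N/d)
  have hMle : (M:ℝ) ≤ (N:ℝ)/d := Nat.cast_div_le
  have hlt : (N:ℝ)/d < (M:ℝ) + 1 := by
    rw [div_lt_iff₀ hd0]
    have hmod : d * M + N % d = N := Nat.div_add_mod N d
    have hmlt : N % d < d := Nat.mod_lt N (by omega)
    have hr : (M+1)*d = d*M + d := by ring
    have : N < (M + 1) * d := by omega
    exact_mod_cast this
  have hlog1 : Real.log M ≤ Real.log ((N:ℝ)/d) := by
    apply Real.log_le_log hM0
    calc (M:ℝ) ≤ (M:ℝ) * 1 := by ring_nf; exact le_refl _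
    _ ≤ (N:ℝ)/d := by rw [mul_one]; exact hMle
  have hlog2 : Real.log ((N:ℝ)/d) ≤ Real.log 2 + Real.log M := by
    rw [← Real.log_mul (by norm_num) (ne_of_gt hM0)]
    apply Real.log_le_log (by positivity)
    have hM1 : (1:ℝ) ≤ M := by exact_mod_cast hM
    linarith
  have hlogdiv : Real.log ((N:ℝ)/d) = Real.log N - Real.log d :=
    Real.log_div (ne_of_gt hN0) (ne_of_gt hd0)
  have hlog2' : Real.log 2 ≤ 1 := by
    calc Real.log 2 ≤ 2 - 1 := Real.log_le_sub_one_of_pos (by norm_num)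
    _ = 1 := by norm_num
  set L := Real.log N - Real.log d with hLdef
  have hlogM : Real.log M ≤ L := hlogdiv ▸ hlog1
  have hLM : L ≤ Real.log 2 + Real.log M := hlogdiv ▸ hlog2
  have hup : T ≤ (L + 3)/d := by
    calc T ≤ H/d := hTle
    _ ≤ (L+3)/d := (div_le_div_iff_of_pos_right hd0).mpr (by linarith)
  have hlo : (L - 3)/d ≤ T := by
    calc (L-3)/d ≤ (H-1)/d := (div_le_div_iff_of_pos_right hd0).mpr (by linarith)
    _ = H/d - 1/d := by rw [sub_div]
    _ ≤ T := hTge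
  rw [sub_div] at hlo
  rw [add_div] at hup
  rw [abs_le]
  constructor <;> linarith

theorem totient_div_n_np1_sum_asymptotic :
    ∃ A : ℝ, ∀ x : ℝ, 2 ≤ x →
      |(∑ n ∈ Finset.Icc 1 ⌊x⌋₊, (Nat.totient n : ℝ) / ((n : ℝ) * (n + 1)))
        - (1 / (Real.pi ^ 2 / 6)) * Real.log x| ≤ A := by
  classical
  set c : ℝ := ∑' d : ℕ, (μ d : ℝ) / (d:ℝ)^2 with hc
  set B : ℝ := ∑' d : ℕ, (d:ℝ) ^ (-(3:ℝ)/2) with hB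
  refine ⟨6 + 1 + |c| * Real.log 2 + 2*B, ?_⟩
  intro x hx
  set N := ⌊x⌋₊ with hNdef
  have hN2 : 2 ≤ N := Nat.le_floor (by exact_mod_cast hx)
  have hN0 : (0:ℝ) < N := by exact_mod_cast (by omega : 0 < N)
  set T : ℕ → ℝ := fun d => ∑ m ∈ Finset.Icc 1 (N/d), (1:ℝ)/(((d*m : ℕ):ℝ)+1) with hT
  set P := ∑ d ∈ Finset.Icc 1 N, (μ d:ℝ)/(d:ℝ)^2 with hP
  set Q := ∑ d ∈ Finset.Icc 1 N, (μ d:ℝ) * Real.log d/(d:ℝ)^2 with hQ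
  set lN := Real.log N with hlN
  -- step 0+1 : rewrite the sum
  have h01 : (∑ n ∈ Finset.Icc 1 N, (Nat.totient n : ℝ) / ((n : ℝ) * ((n:ℝ) + 1)))
      = ∑ d ∈ Finset.Icc 1 N, (μ d:ℝ)/d * T d := by
    have e1 : ∀ n ∈ Finset.Icc 1 N, (Nat.totient n : ℝ)/((n:ℝ)*((n:ℝ)+1))
        = ∑ d ∈ n.divisors, ((μ d:ℝ)/d * (1/((n:ℝ)+1))) := by
      intro n hn
      have hn1 : 1 ≤ n := (Finset.mem_Icc.mp hn).1
      rw [div_mul_eq_div_div, totient_div_eq n hn1, Finset.sum_div]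
      apply Finset.sum_congr rfl
      intro d _
      rw [div_eq_mul_one_div ((μ d:ℝ)/d) (((n:ℝ))+1)]
    rw [Finset.sum_congr rfl e1,
      sum_swap_divisors N (fun d n => (μ d:ℝ)/d * (1/((n:ℝ)+1)))]
    apply Finset.sum_congr rfl
    intro d _
    rw [hT, Finset.mul_sum]
  -- step 2
  have h2 : |(∑ d ∈ Finset.Icc 1 N, (μ d:ℝ)/d * T d)
      - ∑ d ∈ Finset.Icc 1 N, (μ d:ℝ)/(d:ℝ)^2 * (lN - Real.log d)| ≤ 6 := by
    rw [← Finset.sum_sub_distrib]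
    calc |∑ d ∈ Finset.Icc 1 N, ((μ d:ℝ)/d * T d - (μ d:ℝ)/(d:ℝ)^2 * (lN - Real.log d))|
        ≤ ∑ d ∈ Finset.Icc 1 N, |(μ d:ℝ)/d * T d - (μ d:ℝ)/(d:ℝ)^2 * (lN - Real.log d)| :=
          Finset.abs_sum_le_sum_abs _ _
    _ ≤ ∑ d ∈ Finset.Icc 1 N, 3/(d:ℝ)^2 := by
        apply Finset.sum_le_sum
        intro d hd
        obtain ⟨hd1, hd2⟩ := Finset.mem_Icc.mp hd
        have hd0 : (0:ℝ) < d := by exact_mod_cast hd1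
        have key : (μ d:ℝ)/d * T d - (μ d:ℝ)/(d:ℝ)^2 * (lN - Real.log d)
            = (μ d:ℝ)/d * (T d - (lN - Real.log d)/d) := by
          field_simp
        rw [key, abs_mul]
        have hb1 : |(μ d:ℝ)/d| ≤ 1/d := by
          rw [abs_div, abs_of_pos hd0]
          exact (div_le_div_iff_of_pos_right hd0).mpr (abs_moebius_real_le_one d)
        have hb2 : |T d - (lN - Real.log d)/d| ≤ 3/d := inner_sum_est N d hN2 hd1 hd2
        calc |(μ d:ℝ)/d| * |T d - (lN - Real.log d)/d| ≤ (1/d) * (3/d) := by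
              apply mul_le_mul hb1 hb2 (abs_nonneg _) (by positivity)
        _ = 3/(d:ℝ)^2 := by field_simp
    _ ≤ 3 * 2 := by
        have := sum_inv_sq_le N
        rw [show (3:ℝ)*2 = 3*2 from rfl]
        calc ∑ d ∈ Finset.Icc 1 N, 3/(d:ℝ)^2 = 3 * ∑ d ∈ Finset.Icc 1 N, 1/(d:ℝ)^2 := by
              rw [Finset.mul_sum]; apply Finset.sum_congr rfl; intros; ring
        _ ≤ 3 * 2 := by linarith
    _ = 6 := by norm_num
  -- step 3
  have h3 : ∑ d ∈ Finset.Icc 1 N, (μ d:ℝ)/(d:ℝ)^2 * (lN - Real.log d) = lN * P - Q := by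
    rw [hP, hQ, Finset.mul_sum, ← Finset.sum_sub_distrib]
    apply Finset.sum_congr rfl
    intro d _
    ring
  -- step 4
  have h4 : |lN * P - lN * c| ≤ 1 := by
    have hN1 : (1:ℝ) ≤ N := by exact_mod_cast (by omega : 1 ≤ N)
    rw [← mul_sub, abs_mul, abs_of_nonneg (Real.log_nonneg hN1)]
    have htail : |P - c| ≤ 1/(N:ℝ) := by
      rw [abs_sub_comm]; exact moebius_partial_tail N (by omega)
    have hlogN : lN ≤ N := by
      calc lN ≤ (N:ℝ) - 1 := Real.log_le_sub_one_of_pos hN0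
      _ ≤ N := by linarith
    calc lN * |P - c| ≤ (N:ℝ) * (1/(N:ℝ)) := by
          apply mul_le_mul hlogN htail (abs_nonneg _) (by positivity)
    _ = 1 := by field_simp
  -- step 5
  have h5 : |Q| ≤ 2*B := by
    have hsum32 : Summable (fun d : ℕ => (d:ℝ) ^ (-(3:ℝ)/2)) := by
      apply Real.summable_nat_rpow.mpr; norm_num
    calc |Q| ≤ ∑ d ∈ Finset.Icc 1 N, |(μ d:ℝ) * Real.log d/(d:ℝ)^2| :=
          Finset.abs_sum_le_sum_abs _ _
    _ ≤ ∑ d ∈ Finset.Icc 1 N, 2 * (d:ℝ) ^ (-(3:ℝ)/2) := by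
        apply Finset.sum_le_sum
        intro d hd
        obtain ⟨hd1, _⟩ := Finset.mem_Icc.mp hd
        have hd0 : (0:ℝ) < d := by exact_mod_cast hd1
        have hlog0 : 0 ≤ Real.log d := Real.log_nonneg (by exact_mod_cast hd1)
        calc |(μ d:ℝ) * Real.log d/(d:ℝ)^2| = |(μ d:ℝ)| * (Real.log d/(d:ℝ)^2) := by
              rw [mul_div_assoc, abs_mul, abs_of_nonneg (div_nonneg hlog0 (by positivity))]
        _ ≤ 1 * (Real.log d/(d:ℝ)^2) := by
              apply mul_le_mul_of_nonneg_right (abs_moebius_real_le_one d) (by positivity)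
        _ = Real.log d/(d:ℝ)^2 := one_mul _
        _ ≤ 2 * (d:ℝ) ^ (-(3:ℝ)/2) := log_div_sq_le d hd1
    _ = 2 * ∑ d ∈ Finset.Icc 1 N, (d:ℝ) ^ (-(3:ℝ)/2) := by rw [Finset.mul_sum]
    _ ≤ 2 * B := by
        apply mul_le_mul_of_nonneg_left _ (by norm_num)
        apply Summable.sum_le_tsum _ _ hsum32
        intro i _
        positivity
  -- step 6
  have h6 : |c * lN - c * Real.log x| ≤ |c| * Real.log 2 := by
    rw [← mul_sub, abs_mul]
    apply mul_le_mul_of_nonneg_left _ (abs_nonneg c)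
    have hx0 : (0:ℝ) < x := by linarith
    have hxN : (N:ℝ) ≤ x := Nat.floor_le (by linarith)
    have hxN2 : x < (N:ℝ) + 1 := Nat.lt_floor_add_one x
    have h2N : (N:ℝ) + 1 ≤ 2*N := by linarith
    have hup : Real.log x ≤ Real.log 2 + lN := by
      rw [hlN, ← Real.log_mul (by norm_num) (ne_of_gt hN0)]
      apply Real.log_le_log hx0
      linarith
    have hlow : lN ≤ Real.log x := Real.log_le_log hN0 hxN
    rw [abs_le]
    constructor <;> linarith
  -- combine
  have hcval : (1:ℝ) / (Real.pi^2/6) = c := by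
    rw [one_div_div, hc, moebius_tsum_eq]
  rw [hcval, h01]
  have decomp : (∑ d ∈ Finset.Icc 1 N, (μ d:ℝ)/d * T d) - c * Real.log x
      = ((∑ d ∈ Finset.Icc 1 N, (μ d:ℝ)/d * T d)
          - ∑ d ∈ Finset.Icc 1 N, (μ d:ℝ)/(d:ℝ)^2 * (lN - Real.log d))
        + (lN * P - lN * c) + (c * lN - c * Real.log x) + (-Q) := by
    rw [h3]
    ring
  rw [decomp]
  calc |_ + (lN*P - lN*c) + (c*lN - c*Real.log x) + (-Q)|
      ≤ |_ + (lN*P - lN*c) + (c*lN - c*Real.log x)| + |(-Q)| := abs_add_le _ _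
  _ ≤ (|_ + (lN*P - lN*c)| + |c*lN - c*Real.log x|) + |(-Q)| := by
      apply add_le_add_left (abs_add_le _ _)
  _ ≤ ((|(∑ d ∈ Finset.Icc 1 N, (μ d:ℝ)/d * T d)
          - ∑ d ∈ Finset.Icc 1 N, (μ d:ℝ)/(d:ℝ)^2 * (lN - Real.log d)| + |lN*P - lN*c|)
        + |c*lN - c*Real.log x|) + |(-Q)| := by
      apply add_le_add_left; apply add_le_add_left (abs_add_le _ _)
  _ ≤ ((6 + 1) + |c| * Real.log 2) + 2*B := by
      rw [abs_neg]
      apply add_le_add (add_le_add (add_le_add h2 h4) h6) h5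
  _ = 6 + 1 + |c| * Real.log 2 + 2*B := by ring
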